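/- Exact exponential collapse onto the center manifold in the appendix example. Let (x, y, z) : I → ℝ³ be any solution of the system ẋ = x (y − x sin x), ẏ = −y² (y − z), ż = −z + x (y − x sin x)(sin x + x cos x) + x sin x. Then the function g(t) = z(t) − x(t) sin x(t) satisfies ġ = −g on I, and hence z(t) − x(t) sin x(t) = e^{−(t − t₀)} ( z(t₀) − x(t₀) sin x(t₀) ) for all t, t₀ ∈ I. In particular the surface { (x, y, z) : z = x sin x } is invariant under the flow. -/

import Mathlib

/-- Exact exponential collapse onto the center manifold in the appendix example: along any
solution of `ẋ = x(y - x sin x)`, `ẏ = -y²(y - z)`,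
`ż = -z + x(y - x sin x)(sin x + x cos x) + x sin x`, the function `g = z - x sin x`
satisfies `ġ = -g`, hence `g(t) = e^{-(t-t₀)} g(t₀)`; in particular the surface
`{z = x sin x}` is invariant. -/
theorem appendix_exponential_collapse (I : Set ℝ) (hI : I.OrdConnected) (x y z : ℝ → ℝ)
    (hx : ∀ t ∈ I, HasDerivAt x (x t * (y t - x t * Real.sin (x t))) t)
    (hy : ∀ t ∈ I, HasDerivAt y (-(y t) ^ 2 * (y t - z t)) t)
    (hz : ∀ t ∈ I, HasDerivAt z
      (-(z t) + x t * (y t - x t * Real.sin (x t)) * (Real.sin (x t) + x t * Real.cos (x t)) +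
        x t * Real.sin (x t)) t) :
    (∀ t ∈ I, HasDerivAt (fun s => z s - x s * Real.sin (x s))
        (-(z t - x t * Real.sin (x t))) t) ∧
    (∀ t ∈ I, ∀ t₀ ∈ I,
      z t - x t * Real.sin (x t) =
        Real.exp (-(t - t₀)) * (z t₀ - x t₀ * Real.sin (x t₀))) ∧
    (∀ t₀ ∈ I, z t₀ = x t₀ * Real.sin (x t₀) → ∀ t ∈ I, z t = x t * Real.sin (x t)) := by
  have hg : ∀ t ∈ I, HasDerivAt (fun s => z s - x s * Real.sin (x s))
      (-(z t - x t * Real.sin (x t))) t := by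
    intro t ht
    have hxsin : HasDerivAt (fun s => x s * Real.sin (x s))
        (x t * (y t - x t * Real.sin (x t)) * (Real.sin (x t) + x t * Real.cos (x t))) t := by
      have h1 : HasDerivAt (fun s => x s * Real.sin (x s))
          (x t * (y t - x t * Real.sin (x t)) * Real.sin (x t) +
            x t * (Real.cos (x t) * (x t * (y t - x t * Real.sin (x t))))) t :=
        (hx t ht).mul (((Real.hasDerivAt_sin (x t)).comp t (hx t ht)))
      convert h1 using 1; ring
    have := (hz t ht).sub hxsin
    exact this.congr_deriv (by ring)
  have hconv : Convex ℝ I := hI.convex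
  have key : ∀ t ∈ I, ∀ t₀ ∈ I,
      Real.exp t * (z t - x t * Real.sin (x t)) =
        Real.exp t₀ * (z t₀ - x t₀ * Real.sin (x t₀)) := by
    set g : ℝ → ℝ := fun s => z s - x s * Real.sin (x s) with hgdef
    have hF : ∀ t ∈ I, HasFDerivWithinAt (fun s => Real.exp s * g s)
        (0 : ℝ →L[ℝ] ℝ) I t := by
      intro t ht
      have : HasDerivAt (fun s => Real.exp s * g s)
          (Real.exp t * g t + Real.exp t * (-(g t))) t :=
        (Real.hasDerivAt_exp t).mul (hg t ht)
      have h0 : HasDerivAt (fun s => Real.exp s * g s) 0 t := by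
        convert this using 1; ring
      have h1 := (h0.hasDerivWithinAt (s := I)).hasFDerivWithinAt
      have h2 : ContinuousLinearMap.toSpanSingleton ℝ (0 : ℝ) = 0 := by
        ext; simp
      rwa [h2] at h1
    intro t ht t₀ ht₀
    have := hconv.norm_image_sub_le_of_norm_hasFDerivWithin_le (C := 0) hF
      (fun s hs => by simp) ht₀ ht
    simp only [zero_mul, norm_le_zero_iff, sub_eq_zero] at this
    exact this
  refine ⟨hg, ?_, ?_⟩
  · intro t ht t₀ ht₀
    have h := key t ht t₀ ht₀
    have he : Real.exp t ≠ 0 := Real.exp_ne_zero t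
    have : Real.exp (-(t - t₀)) = Real.exp t₀ / Real.exp t := by
      rw [Real.exp_neg, Real.exp_sub]; field_simp
    rw [this]
    field_simp
    linarith [h]
  · intro t₀ ht₀ h0 t ht
    have h := key t ht t₀ ht₀
    have h' : Real.exp t * (z t - x t * Real.sin (x t)) = 0 := by
      rw [h0] at h; simpa using h
    rcases mul_eq_zero.mp h' with h'' | h''
    · exact absurd h'' (Real.exp_ne_zero t)
    · linarith
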